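/- Let X be a two-dimensional real Banach space, z ∈ S_X, and ε ∈ [0,1). Then [⋃_{α∈ℝ} B̄(αz, ε)] ∩ S_X = A₁ ∪ A₂, where A₁ = [⋃_{α∈[1−ε,1+ε]} B̄(αz, ε)] ∩ S_X and A₂ = [⋃_{α∈[−1−ε,−1+ε]} B̄(αz, ε)] ∩ S_X, and both A₁ and A₂ are connected; in particular the set has at most two connected components. -/

import Mathlib

open Metric Set
set_option linter.unusedVariables false

lemma arithA (ε t s n : ℝ) (hε0 : 0 ≤ ε) (ht1 : t ≤ 1) (hs : s = (1-t)*ε)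
    (hn2 : 1 - t ≤ n) : s ≤ ε * n := by nlinarith

lemma arithB (ε α t a s n : ℝ) (hε0 : 0 ≤ ε) (hε1 : ε < 1) (ht0 : 0 ≤ t) (ht1 : t ≤ 1)
    (hα1 : 1 - ε ≤ α) (ha : a = (1-t)*α + t) (hs : s = (1-t)*ε)
    (hn_ub : n ≤ a + s) (hn1t : 1 - t ≤ n) : (1 - 2*ε) * n ≤ a - s := by
  rcases le_total ε (1/2) with h | h
  · nlinarith
  · nlinarith

lemma arithC (ε α t a s n fz : ℝ) (hε0 : 0 ≤ ε) (hε1 : ε < 1) (ht0 : 0 ≤ t) (ht1 : t ≤ 1)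
    (hα1 : 1 - ε ≤ α) (hα2 : α ≤ 1 + ε) (ha : a = (1-t)*α + t) (hs : s = (1-t)*ε)
    (hn_lb : a - s ≤ n) (hn2 : 1 - t + t * fz ≤ n) (hfz0 : 0 < fz) :
    a + s ≤ (1 + 2*ε) * n := by
  rcases eq_or_lt_of_le hε0 with h | h
  · rw [← h] at hs ⊢
    simp only [mul_zero, zero_mul] at hs ⊢
    rw [hs] at hn_lb ⊢
    linarith
  · by_contra hcon
    push_neg at hcon
    have j : ε * ((1-t)*α + t) < ε * ((1-t)*(1+ε)) := by
      nlinarith [mul_le_mul_of_nonneg_left hn_lb (by linarith : (0:ℝ) ≤ 1 + 2*ε)]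
    have j2 : (1-t)*α + t < (1-t)*(1+ε) := lt_of_mul_lt_mul_left j (le_of_lt h)
    have i1 : t < (1 - t) * (1 + ε - α) := by nlinarith
    have i2 : (1 - t) * (1 + ε - α) < t * (1 - (1 + 2*ε) * fz) := by
      nlinarith [mul_le_mul_of_nonneg_left hn2 (by linarith : (0:ℝ) ≤ 1 + 2*ε)]
    nlinarith [mul_nonneg ht0 (mul_nonneg (by linarith : (0:ℝ) ≤ 1+2*ε) hfz0.le)]

lemma arithKey (ε a s n : ℝ) (hε0 : 0 ≤ ε) (hn0 : 0 < n) (hA' : s ≤ ε * n)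
    (hB : (1 - 2*ε) * n ≤ a - s) (hC : a + s ≤ (1 + 2*ε) * n) :
    |a - (max (1-ε) (min (1+ε) (a/n))) * n| + s ≤ ε * n := by
  set β := max (1-ε) (min (1+ε) (a/n)) with hβ
  rcases le_total (a / n) (1 - ε) with h | h
  · have hβv : β = 1 - ε := by
      rw [hβ, min_def]
      split_ifs with h2
      · exact max_eq_left (by linarith)
      · push_neg at h2
        exact max_eq_left (by linarith)
    have han : a ≤ (1 - ε) * n := by rwa [div_le_iff₀ hn0] at h
    rw [hβv, abs_of_nonpos (by nlinarith)]
    nlinarith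
  · rcases le_total (1 + ε) (a / n) with h3 | h3
    · have hβv : β = 1 + ε := by
        rw [hβ, min_eq_left h3]
        exact max_eq_right (by linarith)
      have han : (1 + ε) * n ≤ a := by rwa [le_div_iff₀ hn0] at h3
      rw [hβv, abs_of_nonneg (by nlinarith)]
      nlinarith
    · have hβv : β = a / n := by
        rw [hβ, min_eq_right h3]
        exact max_eq_right h
      rw [hβv, div_mul_cancel₀ _ (ne_of_gt hn0)]
      simp only [sub_self, abs_zero, zero_add]
      exact hA'

lemma aux_conn {X : Type*} [NormedAddCommGroup X] [NormedSpace ℝ X]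
    (z : X) (hz : ‖z‖ = 1) (ε : ℝ) (hε0 : 0 ≤ ε) (hε1 : ε < 1) :
    IsConnected ((⋃ α ∈ Set.Icc (1 - ε) (1 + ε), Metric.closedBall (α • z) ε) ∩
        Metric.sphere (0 : X) 1) := by
  have hzA : z ∈ (⋃ α ∈ Set.Icc (1 - ε) (1 + ε), Metric.closedBall (α • z) ε) ∩
      Metric.sphere (0 : X) 1 := by
    constructor
    · refine mem_iUnion₂.2 ⟨1, ⟨by linarith, by linarith⟩, ?_⟩
      simp [hε0]
    · simp [hz]
  apply IsPathConnected.isConnected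
  refine ⟨z, hzA, ?_⟩
  intro x hx
  refine JoinedIn.symm ?_
  obtain ⟨hxU, hxS⟩ := hx
  have hxn : ‖x‖ = 1 := by simpa using hxS
  obtain ⟨α, hα, hxb⟩ := mem_iUnion₂.1 hxU
  obtain ⟨hα1, hα2⟩ := hα
  have hwε : ‖x - α • z‖ ≤ ε := by rwa [Metric.mem_closedBall, dist_eq_norm] at hxb
  have hx0 : x ≠ 0 := by
    intro h
    rw [h, norm_zero] at hxn
    exact one_ne_zero hxn.symm
  obtain ⟨f, hf1, hfx0⟩ := exists_dual_vector ℝ x (norm_ne_zero_iff.mpr hx0)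
  have hfx : f x = 1 := by rw [hfx0, hxn]; norm_num
  have hfz_le : f z ≤ 1 := by
    have h := f.le_opNorm z
    rw [hf1, hz, one_mul] at h
    exact le_trans (le_abs_self _) h
  have hfw : f (x - α • z) ≤ ε := by
    have h := f.le_opNorm (x - α • z)
    rw [hf1, one_mul] at h
    exact le_trans (le_abs_self _) (le_trans h hwε)
  have hfweq : f (x - α • z) = 1 - α * f z := by
    rw [map_sub, map_smul, hfx, smul_eq_mul]
  have hαfz : 1 - ε ≤ α * f z := by rw [hfweq] at hfw; linarith
  have hα0 : 0 < α := by linarith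
  have hfz0 : 0 < f z := by nlinarith
  have hfoy : ∀ t : ℝ, f ((1 - t) • x + t • z) = (1 - t) + t * f z := by
    intro t
    rw [map_add, map_smul, map_smul, hfx, smul_eq_mul, smul_eq_mul, mul_one]
  have hfley : ∀ v : X, f v ≤ ‖v‖ := by
    intro v
    have h := f.le_opNorm v
    rw [hf1, one_mul] at h
    exact le_trans (le_abs_self _) h
  have hnpos : ∀ t : ℝ, 0 ≤ t → t ≤ 1 → 0 < ‖(1 - t) • x + t • z‖ := by
    intro t ht0 ht1
    have h1 := hfley ((1 - t) • x + t • z)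
    rw [hfoy t] at h1
    nlinarith
  have key : ∀ t : ℝ, 0 ≤ t → t ≤ 1 →
      (‖(1 - t) • x + t • z‖⁻¹ • ((1 - t) • x + t • z)) ∈
        (⋃ α ∈ Set.Icc (1 - ε) (1 + ε), Metric.closedBall (α • z) ε) ∩
          Metric.sphere (0 : X) 1 := by
    intro t ht0 ht1
    have hn0 : 0 < ‖(1 - t) • x + t • z‖ := hnpos t ht0 ht1
    set n : ℝ := ‖(1 - t) • x + t • z‖ with hn
    have ha0 : (0:ℝ) < (1 - t) * α + t := by nlinarith
    have hy2 : (1 - t) • x + t • z = ((1 - t) * α + t) • z + (1 - t) • (x - α • z) := by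
      module
    have e1 : ‖((1 - t) * α + t) • z‖ = (1 - t) * α + t := by
      rw [norm_smul, hz, Real.norm_eq_abs, abs_of_pos ha0, mul_one]
    have e2 : ‖(1 - t) • (x - α • z)‖ ≤ (1 - t) * ε := by
      rw [norm_smul, Real.norm_eq_abs, abs_of_nonneg (by linarith : (0:ℝ) ≤ 1 - t)]
      nlinarith
    have hn_ub : n ≤ ((1 - t) * α + t) + (1 - t) * ε := by
      rw [hn, hy2]
      calc ‖((1 - t) * α + t) • z + (1 - t) • (x - α • z)‖
          ≤ ‖((1 - t) * α + t) • z‖ + ‖(1 - t) • (x - α • z)‖ := norm_add_le _ _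
        _ ≤ ((1 - t) * α + t) + (1 - t) * ε := by rw [e1]; linarith
    have hn_lb : ((1 - t) * α + t) - (1 - t) * ε ≤ n := by
      have h := norm_sub_norm_le (((1 - t) * α + t) • z) (-((1 - t) • (x - α • z)))
      rw [sub_neg_eq_add, norm_neg, e1, ← hy2, ← hn] at h
      linarith
    have hn2 : 1 - t + t * f z ≤ n := by
      have h1 := hfley ((1 - t) • x + t • z)
      rw [hfoy t] at h1
      rw [hn]
      linarith
    have hn1t : 1 - t ≤ n := by nlinarith
    have hA' := arithA ε t ((1-t)*ε) n hε0 ht1 rfl hn1t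
    have hB := arithB ε α t ((1-t)*α + t) ((1-t)*ε) n hε0 hε1 ht0 ht1 hα1 rfl rfl hn_ub hn1t
    have hC := arithC ε α t ((1-t)*α + t) ((1-t)*ε) n (f z) hε0 hε1 ht0 ht1 hα1 hα2 rfl rfl
      hn_lb hn2 hfz0
    have hkey := arithKey ε ((1-t)*α + t) ((1-t)*ε) n hε0 hn0 hA' hB hC
    set β := max (1-ε) (min (1+ε) (((1-t)*α + t)/n)) with hβ
    have hβmem : β ∈ Set.Icc (1 - ε) (1 + ε) :=
      ⟨le_max_left _ _, max_le (by linarith) (min_le_left _ _)⟩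
    constructor
    · refine mem_iUnion₂.2 ⟨β, hβmem, ?_⟩
      rw [Metric.mem_closedBall, dist_eq_norm]
      have hexp : n⁻¹ • ((1 - t) • x + t • z) - β • z =
          (n⁻¹ * ((1 - t) * α + t) - β) • z + (n⁻¹ * (1 - t)) • (x - α • z) := by
        rw [hy2]; module
      rw [hexp]
      have e3 : ‖(n⁻¹ * ((1 - t) * α + t) - β) • z‖ = |n⁻¹ * ((1 - t) * α + t) - β| := by
        rw [norm_smul, hz, Real.norm_eq_abs, mul_one]
      have e4 : |n⁻¹ * ((1 - t) * α + t) - β| = n⁻¹ * |((1 - t) * α + t) - β * n| := by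
        have hid : n⁻¹ * ((1 - t) * α + t) - β = n⁻¹ * (((1 - t) * α + t) - β * n) := by
          field_simp
        rw [hid, abs_mul, abs_of_pos (inv_pos.2 hn0)]
      have e5 : ‖(n⁻¹ * (1 - t)) • (x - α • z)‖ ≤ n⁻¹ * ((1 - t) * ε) := by
        rw [norm_smul, Real.norm_eq_abs, abs_of_nonneg (mul_nonneg (inv_pos.2 hn0).le (by linarith : (0:ℝ) ≤ 1 - t))]
        rw [mul_assoc]
        apply mul_le_mul_of_nonneg_left _ (inv_pos.2 hn0).le
        apply mul_le_mul_of_nonneg_left hwε (by linarith)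
      calc ‖(n⁻¹ * ((1 - t) * α + t) - β) • z + (n⁻¹ * (1 - t)) • (x - α • z)‖
          ≤ ‖(n⁻¹ * ((1 - t) * α + t) - β) • z‖ + ‖(n⁻¹ * (1 - t)) • (x - α • z)‖ :=
            norm_add_le _ _
        _ ≤ n⁻¹ * |((1 - t) * α + t) - β * n| + n⁻¹ * ((1 - t) * ε) := by
            rw [e3, e4]; linarith
        _ = n⁻¹ * (|((1 - t) * α + t) - β * n| + (1 - t) * ε) := by ring
        _ ≤ n⁻¹ * (ε * n) := by
            apply mul_le_mul_of_nonneg_left hkey (by positivity)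
        _ = ε := by field_simp
    · simp only [mem_sphere_iff_norm, sub_zero]
      rw [norm_smul, Real.norm_eq_abs, abs_of_pos (inv_pos.2 hn0), ← hn,
        inv_mul_cancel₀ (ne_of_gt hn0)]
  have hg : Continuous fun t : unitInterval => (1 - (t:ℝ)) • x + (t:ℝ) • z := by
    fun_prop
  have hgn : ∀ t : unitInterval, ‖(1 - (t:ℝ)) • x + (t:ℝ) • z‖ ≠ 0 := fun t =>
    ne_of_gt (hnpos t t.2.1 t.2.2)
  refine ⟨⟨⟨fun t : unitInterval =>
      ‖(1 - (t:ℝ)) • x + (t:ℝ) • z‖⁻¹ • ((1 - (t:ℝ)) • x + (t:ℝ) • z), ?_⟩, ?_, ?_⟩,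
      fun t => key t t.2.1 t.2.2⟩
  · exact (hg.norm.inv₀ hgn).smul hg
  · simp [hxn]
  · simp [hz]

theorem union_balls_inter_sphere_two_components {X : Type*} [NormedAddCommGroup X]
    [NormedSpace ℝ X] [FiniteDimensional ℝ X] (hdim : Module.finrank ℝ X = 2)
    (z : X) (hz : ‖z‖ = 1) (ε : ℝ) (hε0 : 0 ≤ ε) (hε1 : ε < 1) :
    ((⋃ α : ℝ, Metric.closedBall (α • z) ε) ∩ Metric.sphere (0 : X) 1 =
        ((⋃ α ∈ Set.Icc (1 - ε) (1 + ε), Metric.closedBall (α • z) ε) ∩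
            Metric.sphere (0 : X) 1) ∪
          ((⋃ α ∈ Set.Icc (-1 - ε) (-1 + ε), Metric.closedBall (α • z) ε) ∩
            Metric.sphere (0 : X) 1)) ∧
      IsConnected ((⋃ α ∈ Set.Icc (1 - ε) (1 + ε), Metric.closedBall (α • z) ε) ∩
          Metric.sphere (0 : X) 1) ∧
      IsConnected ((⋃ α ∈ Set.Icc (-1 - ε) (-1 + ε), Metric.closedBall (α • z) ε) ∩
          Metric.sphere (0 : X) 1) := by
  refine ⟨?_, aux_conn z hz ε hε0 hε1, ?_⟩
  · ext x
    simp only [mem_inter_iff, mem_iUnion, mem_union, exists_prop]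
    constructor
    · rintro ⟨⟨α, hα⟩, hxs⟩
      have hxn : ‖x‖ = 1 := by simpa using hxs
      have hb : ‖x - α • z‖ ≤ ε := by rwa [Metric.mem_closedBall, dist_eq_norm] at hα
      have h2 : abs (1 - abs α) ≤ ε := by
        have h3 := abs_norm_sub_norm_le x (α • z)
        rw [norm_smul, Real.norm_eq_abs, hz, mul_one, hxn] at h3
        exact le_trans h3 hb
      rw [abs_le] at h2
      rcases le_total 0 α with h | h
      · rw [abs_of_nonneg h] at h2
        exact Or.inl ⟨⟨α, ⟨by linarith [h2.2], by linarith [h2.1]⟩, hα⟩, hxs⟩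
      · rw [abs_of_nonpos h] at h2
        exact Or.inr ⟨⟨α, ⟨by linarith [h2.2], by linarith [h2.1]⟩, hα⟩, hxs⟩
    · rintro (⟨⟨α, _, hα⟩, hxs⟩ | ⟨⟨α, _, hα⟩, hxs⟩) <;> exact ⟨⟨α, hα⟩, hxs⟩
  · have hzn : ‖-z‖ = 1 := by rwa [norm_neg]
    have hset : (⋃ α ∈ Set.Icc (-1 - ε) (-1 + ε), Metric.closedBall (α • z) ε) =
        (⋃ α ∈ Set.Icc (1 - ε) (1 + ε), Metric.closedBall (α • (-z)) ε) := by
      ext x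
      simp only [mem_iUnion, exists_prop]
      constructor
      · rintro ⟨α, ⟨h1, h2⟩, hb⟩
        refine ⟨-α, ⟨by linarith, by linarith⟩, ?_⟩
        rwa [smul_neg, neg_smul, neg_neg]
      · rintro ⟨α, ⟨h1, h2⟩, hb⟩
        refine ⟨-α, ⟨by linarith, by linarith⟩, ?_⟩
        rwa [smul_neg, ← neg_smul] at hb
    rw [hset]
    exact aux_conn (-z) hzn ε hε0 hε1
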